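/- For every T ≥ 23, the ratio of the exploration time of an agent with a fixed safety net R = T to that of an agent without a safety net satisfies (T + 1 − √(4T + 1)) / ((T − √(2T))/2) ≥ 2(T − √(5T))/(T − √(2T)) ≥ 3/2. Hence for T ≥ 23, financial support for a fixed duration lets the agent explore the striving arm at least 1.5 times longer than an unsupported agent. -/
import Mathlib


theorem stmt14 (T : ℝ) (hT : 23 ≤ T) :
    2 * (T - Real.sqrt (5 * T)) / (T - Real.sqrt (2 * T)) ≤
      (T + 1 - Real.sqrt (4 * T + 1)) / ((T - Real.sqrt (2 * T)) / 2) ∧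
    3 / 2 ≤ 2 * (T - Real.sqrt (5 * T)) / (T - Real.sqrt (2 * T)) := by
  have hT0 : (0:ℝ) ≤ T := by linarith
  have ht : 0 ≤ Real.sqrt T := Real.sqrt_nonneg T
  have h2T : Real.sqrt (2*T) = Real.sqrt 2 * Real.sqrt T := Real.sqrt_mul (by norm_num) T
  have h5T : Real.sqrt (5*T) = Real.sqrt 5 * Real.sqrt T := Real.sqrt_mul (by norm_num) T
  have hs2 : Real.sqrt 2 ^ 2 = 2 := Real.sq_sqrt (by norm_num)
  have hs5 : Real.sqrt 5 ^ 2 = 5 := Real.sq_sqrt (by norm_num)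
  have hs2n : 0 ≤ Real.sqrt 2 := Real.sqrt_nonneg 2
  have hs5n : 0 ≤ Real.sqrt 5 := Real.sqrt_nonneg 5
  have htsq : Real.sqrt T ^ 2 = T := Real.sq_sqrt hT0
  have hden : 0 < T - Real.sqrt (2*T) := by
    have h := Real.sqrt_lt_sqrt (by positivity : (0:ℝ) ≤ 2*T)
      (show 2*T < T*T by nlinarith)
    rw [Real.sqrt_mul_self hT0] at h
    linarith
  have h10 : (25:ℝ)/8 ≤ Real.sqrt 2 * Real.sqrt 5 := by
    nlinarith [mul_nonneg hs2n hs5n]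
  have hkey : 4 * Real.sqrt 5 - 3 * Real.sqrt 2 ≤ Real.sqrt T := by
    nlinarith [mul_nonneg hs2n hs5n]
  constructor
  · have hnum : Real.sqrt (4*T+1) ≤ 1 + Real.sqrt (5*T) := by
      have h1 : (4*T+1 : ℝ) ≤ (1 + Real.sqrt (5*T))^2 := by
        have := Real.sq_sqrt (show (0:ℝ) ≤ 5*T by linarith)
        have := Real.sqrt_nonneg (5*T)
        nlinarith
      have h2 := Real.sqrt_le_sqrt h1
      rwa [Real.sqrt_sq (by positivity)] at h2
    rw [div_div_eq_mul_div]
    exact div_le_div_of_nonneg_right (by linarith) hden.le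
  · rw [le_div_iff₀ hden]
    rw [h2T, h5T]
    nlinarith [mul_le_mul_of_nonneg_left hkey ht]
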